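/- For all φ, ψ ∈ F^A the commutator of the derivations ev_φ and ev_ψ satisfies [ev_φ, ev_ψ] = ev_ξ, where ξ = (ξ^a) with ξ^a = ev_φ(ψ^a) − ev_ψ(φ^a). Moreover, if the map φ ↦ ev_φ is injective and φ, ψ ∈ Ē, then ξ ∈ Ē; hence Ē carries the structure of a Lie algebra with bracket [φ,ψ] = ξ. -/

import Mathlib

noncomputable section

variable {𝔽 : Type*} [Field 𝔽] {F : Type*} [CommRing F] [Algebra 𝔽 F] {m : ℕ}
  {A A' : Type*}

/-- Membership in the space of divergences `Div F^M = {Σ_μ D_μ ψ^μ}`. -/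
def IsDiv (D : Fin m → Derivation 𝔽 F F) (f : F) : Prop :=
  ∃ ψ : Fin m → F, f = ∑ μ, D μ (ψ μ)

/-- The evolutionary differentiation `ev_φ f = Σ_a φ^a · ∂_a f` (a finite sum). -/
def ev (pa : A → Derivation 𝔽 F F) (φ : A → F) (f : F) : F :=
  ∑ᶠ a, φ a * pa a f

/-- `(∇φ)^a_μ = D_μ φ^a + Σ_b Γ^a_{μb} · φ^b`; here `Γ b μ a` denotes `Γ^b_{μa}`. -/
def nabla (D : Fin m → Derivation 𝔽 F F) (Γ : A → Fin m → A → F)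
    (φ : A → F) (a : A) (μ : Fin m) : F :=
  D μ (φ a) + ∑ᶠ b, Γ a μ b * φ b

/-- `(∇*χ)_a = -Σ_μ D_μ χ^μ_a + Σ_{μ,b} Γ^b_{μa} · χ^μ_b`. -/
def nablaStar (D : Fin m → Derivation 𝔽 F F) (Γ : A → Fin m → A → F)
    (χ : Fin m → A → F) (a : A) : F :=
  -∑ μ, D μ (χ μ a) + ∑ᶠ b, ∑ μ, Γ b μ a * χ μ b

/-- The pairing `⟨f, φ⟩ = Σ_a f_a · φ^a`. -/
def pair (f φ : A → F) : F := ∑ᶠ a, f a * φ a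

/-- `D^i = D_1^{i^1} ∘ ⋯ ∘ D_m^{i^m}`. -/
def Dpow (D : Fin m → Derivation 𝔽 F F) (i : Fin m → ℕ) : F → F :=
  (List.finRange m).foldr (fun μ g => (⇑(D μ))^[i μ] ∘ g) id

/-- `|i| = i^1 + ⋯ + i^m`. -/
def msize {m : ℕ} (i : Fin m → ℕ) : ℕ := ∑ μ, i μ

/-- The differential operator `P(D)L = Σ_i P_i · D^i L`. -/
def applyP (D : Fin m → Derivation 𝔽 F F) (P : (Fin m → ℕ) → F) (L : F) : F :=
  ∑ᶠ i, P i * Dpow D i L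

/-- The Lagrange dual operator `P*(D)K = Σ_i (-1)^{|i|} D^i (P_i · K)`. -/
def applyPstar (D : Fin m → Derivation 𝔽 F F) (P : (Fin m → ℕ) → F) (K : F) : F :=
  ∑ᶠ i, (-1 : F) ^ msize i * Dpow D i (P i * K)

/-- The jet map `(jφ)^a = Σ_{i,α} j^a_{iα} · D^i φ^α`; here `jc a i α` denotes `j^a_{iα}`. -/
def jmap (D : Fin m → Derivation 𝔽 F F) (jc : A → (Fin m → ℕ) → A' → F)
    (φ : A' → F) (a : A) : F :=
  ∑ᶠ i, ∑ᶠ α, jc a i α * Dpow D i (φ α)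

/-- The Lagrange dual `(j*f)_α = Σ_{a,i} (-1)^{|i|} D^i (j^a_{iα} · f_a)`. -/
def jstar (D : Fin m → Derivation 𝔽 F F) (jc : A → (Fin m → ℕ) → A' → F)
    (f : A → F) (α : A') : F :=
  ∑ᶠ a, ∑ᶠ i, (-1 : F) ^ msize i * Dpow D i (jc a i α * f a)

/-- `(Λf)^α = Σ_{β,i} Λ^{αβ}_i · D^i f_β`; here `Λc α β i` denotes `Λ^{αβ}_i`. -/
def Lam (D : Fin m → Derivation 𝔽 F F) (Λc : A' → A' → (Fin m → ℕ) → F)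
    (f : A' → F) (α : A') : F :=
  ∑ᶠ β, ∑ᶠ i, Λc α β i * Dpow D i (f β)

/-- The Lagrange dual `(Λ*f)^α = Σ_{β,i} (-1)^{|i|} D^i (Λ^{βα}_i · f_β)`. -/
def LamStar (D : Fin m → Derivation 𝔽 F F) (Λc : A' → A' → (Fin m → ℕ) → F)
    (f : A' → F) (α : A') : F :=
  ∑ᶠ β, ∑ᶠ i, (-1 : F) ^ msize i * Dpow D i (Λc β α i * f β)

/-- The variational derivative `δR = j*(∂R)`, where `∂R = (∂_a R)`. -/
def vard (D : Fin m → Derivation 𝔽 F F) (pa : A → Derivation 𝔽 F F)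
    (jc : A → (Fin m → ℕ) → A' → F) (R : F) : A' → F :=
  jstar D jc (fun a => pa a R)

/-- The Hamiltonian vector `φ(R) = j(Λ(δR))`. -/
def hamv (D : Fin m → Derivation 𝔽 F F) (pa : A → Derivation 𝔽 F F)
    (jc : A → (Fin m → ℕ) → A' → F) (Λc : A' → A' → (Fin m → ℕ) → F) (R : F) : A → F :=
  jmap D jc (Lam D Λc (vard D pa jc R))

/-- The commutator `[ev_ψ, Λ]`, acting with coefficients `ev_ψ(Λ^{αβ}_i)`. -/
def evLam (D : Fin m → Derivation 𝔽 F F) (pa : A → Derivation 𝔽 F F)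
    (Λc : A' → A' → (Fin m → ℕ) → F) (ψ : A → F) (f : A' → F) (α : A') : F :=
  ∑ᶠ β, ∑ᶠ i, ev pa ψ (Λc α β i) * Dpow D i (f β)


section proofs
variable {𝔽 : Type*} [Field 𝔽] {F : Type*} [CommRing F] [Algebra 𝔽 F] {m : ℕ} {A : Type*}

private theorem finsum_eq_sum_of (g : A → F) (s : Finset A)
    (h : ∀ a, g a ≠ 0 → a ∈ s) : ∑ᶠ a, g a = ∑ a ∈ s, g a :=
  finsum_eq_sum_of_support_subset g (fun a ha => h a ha)

private theorem ev_eq_sum (pa : A → Derivation 𝔽 F F) (θ : A → F) (f : F) (s : Finset A)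
    (h : ∀ a, pa a f ≠ 0 → a ∈ s) : ev pa θ f = ∑ a ∈ s, θ a * pa a f :=
  finsum_eq_sum_of _ s fun a ha => h a fun h0 => ha (by rw [h0, mul_zero])

private theorem ev_zero' (pa : A → Derivation 𝔽 F F) (θ : A → F) : ev pa θ 0 = 0 := by
  rw [ev_eq_sum pa θ 0 ∅ (fun a ha => absurd (map_zero (pa a)) ha), Finset.sum_empty]

variable (D : Fin m → Derivation 𝔽 F F) (pa : A → Derivation 𝔽 F F)
  (hpacomm : ∀ a b (f : F), pa a (pa b f) = pa b (pa a f))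
  (hpafin : ∀ f : F, {a : A | pa a f ≠ 0}.Finite)
  (Γ : A → Fin m → A → F)
  (hΓfin : ∀ b : A, {p : Fin m × A | Γ b p.1 p.2 ≠ 0}.Finite)
  (hΓ : ∀ (μ : Fin m) (a : A) (f : F),
      D μ (pa a f) - pa a (D μ f) = ∑ᶠ b, Γ b μ a * pa b f)

include hpafin in
private theorem ev_add' (θ : A → F) (x y : F) :
    ev pa θ (x + y) = ev pa θ x + ev pa θ y := by
  classical
  set s := (hpafin x).toFinset ∪ (hpafin y).toFinset with hs
  have hx : ∀ a, pa a x ≠ 0 → a ∈ s := fun a ha =>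
    Finset.mem_union_left _ ((hpafin x).mem_toFinset.2 ha)
  have hy : ∀ a, pa a y ≠ 0 → a ∈ s := fun a ha =>
    Finset.mem_union_right _ ((hpafin y).mem_toFinset.2 ha)
  have hxy : ∀ a, pa a (x + y) ≠ 0 → a ∈ s := by
    intro a ha
    rw [map_add] at ha
    by_cases h1 : pa a x = 0
    · exact hy a (by simpa [h1] using ha)
    · exact hx a h1
  rw [ev_eq_sum pa θ _ s hxy, ev_eq_sum pa θ x s hx, ev_eq_sum pa θ y s hy,
    ← Finset.sum_add_distrib]
  exact Finset.sum_congr rfl fun a _ => by rw [map_add, mul_add]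

include hpafin in
private theorem ev_neg' (θ : A → F) (x : F) : ev pa θ (-x) = -ev pa θ x := by
  have hx : ∀ a, pa a x ≠ 0 → a ∈ (hpafin x).toFinset := fun a ha =>
    (hpafin x).mem_toFinset.2 ha
  have hnx : ∀ a, pa a (-x) ≠ 0 → a ∈ (hpafin x).toFinset := fun a ha =>
    (hpafin x).mem_toFinset.2 (by intro h; rw [map_neg, h, neg_zero] at ha; exact ha rfl)
  rw [ev_eq_sum pa θ (-x) _ hnx, ev_eq_sum pa θ x _ hx, ← Finset.sum_neg_distrib]
  exact Finset.sum_congr rfl fun a _ => by rw [map_neg, mul_neg]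

include hpafin in
private theorem ev_finset_sum {β : Type*} (θ : A → F) (s : Finset β) (g : β → F) :
    ev pa θ (∑ b ∈ s, g b) = ∑ b ∈ s, ev pa θ (g b) := by
  classical
  induction s using Finset.induction with
  | empty => simpa using ev_zero' pa θ
  | insert _ _ hns ih =>
      rw [Finset.sum_insert hns, Finset.sum_insert hns, ev_add' pa hpafin, ih]

include hpafin in
private theorem ev_mul' (θ : A → F) (x y : F) :
    ev pa θ (x * y) = ev pa θ x * y + x * ev pa θ y := by
  classical
  set s := ((hpafin x).toFinset ∪ (hpafin y).toFinset) ∪ (hpafin (x * y)).toFinset with hs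
  have hx : ∀ a, pa a x ≠ 0 → a ∈ s := fun a ha =>
    Finset.mem_union_left _ (Finset.mem_union_left _ ((hpafin x).mem_toFinset.2 ha))
  have hy : ∀ a, pa a y ≠ 0 → a ∈ s := fun a ha =>
    Finset.mem_union_left _ (Finset.mem_union_right _ ((hpafin y).mem_toFinset.2 ha))
  have hxy : ∀ a, pa a (x * y) ≠ 0 → a ∈ s := fun a ha =>
    Finset.mem_union_right _ ((hpafin (x * y)).mem_toFinset.2 ha)
  rw [ev_eq_sum pa θ (x * y) s hxy, ev_eq_sum pa θ x s hx, ev_eq_sum pa θ y s hy,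
    Finset.mul_sum, Finset.sum_mul, ← Finset.sum_add_distrib]
  refine Finset.sum_congr rfl fun a _ => ?_
  rw [Derivation.leibniz, smul_eq_mul, smul_eq_mul]
  ring

private def sliceF (c : A) : Finset A := ((hΓfin c).image Prod.snd).toFinset

private theorem mem_sliceF {c b : A} {μ : Fin m} (h : Γ c μ b ≠ 0) : b ∈ sliceF Γ hΓfin c :=
  ((hΓfin c).image Prod.snd).mem_toFinset.2 ⟨(μ, b), h, rfl⟩

private theorem not_mem_sliceF {c b : A} {μ : Fin m} (h : b ∉ sliceF Γ hΓfin c) :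
    Γ c μ b = 0 := by
  by_contra h0; exact h (mem_sliceF Γ hΓfin h0)

include hpacomm hpafin hΓ in
private theorem pa_Gamma_symm
    (hinj : ∀ ψ : A → F, (∀ f, ev pa ψ f = 0) → ψ = 0)
    (μ : Fin m) (e x y : A) : pa y (Γ e μ x) = pa x (Γ e μ y) := by
  classical
  have key : (fun b => pa y (Γ b μ x) - pa x (Γ b μ y)) = 0 := by
    apply hinj
    intro f
    set Cf := (hpafin f).toFinset with hCf
    have hCfm : ∀ b, pa b f ≠ 0 → b ∈ Cf := fun b hb => (hpafin f).mem_toFinset.2 hb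
    have e1 : pa y (D μ (pa x f)) - pa y (pa x (D μ f))
        = ∑ b ∈ Cf, (pa y (Γ b μ x) * pa b f + Γ b μ x * pa y (pa b f)) := by
      have h := hΓ μ x f
      rw [finsum_eq_sum_of _ Cf (fun b hb => hCfm b (fun h0 => hb (by rw [h0, mul_zero])))] at h
      rw [← map_sub, h, map_sum]
      refine Finset.sum_congr rfl fun b _ => ?_
      rw [Derivation.leibniz, smul_eq_mul, smul_eq_mul]
      ring
    have e2 : pa x (D μ (pa y f)) - pa x (pa y (D μ f))
        = ∑ b ∈ Cf, (pa x (Γ b μ y) * pa b f + Γ b μ y * pa x (pa b f)) := by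
      have h := hΓ μ y f
      rw [finsum_eq_sum_of _ Cf (fun b hb => hCfm b (fun h0 => hb (by rw [h0, mul_zero])))] at h
      rw [← map_sub, h, map_sum]
      refine Finset.sum_congr rfl fun b _ => ?_
      rw [Derivation.leibniz, smul_eq_mul, smul_eq_mul]
      ring
    have e3 : D μ (pa x (pa y f)) - pa x (D μ (pa y f))
        = ∑ b ∈ Cf, Γ b μ x * pa y (pa b f) := by
      have h := hΓ μ x (pa y f)
      rw [h]
      have hfun : (fun b => Γ b μ x * pa b (pa y f)) = fun b => Γ b μ x * pa y (pa b f) := by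
        funext b; rw [hpacomm b y f]
      rw [hfun]
      exact finsum_eq_sum_of _ Cf fun b hb =>
        hCfm b (fun h0 => hb (by rw [h0, map_zero, mul_zero]))
    have e4 : D μ (pa y (pa x f)) - pa y (D μ (pa x f))
        = ∑ b ∈ Cf, Γ b μ y * pa x (pa b f) := by
      have h := hΓ μ y (pa x f)
      rw [h]
      have hfun : (fun b => Γ b μ y * pa b (pa x f)) = fun b => Γ b μ y * pa x (pa b f) := by
        funext b; rw [hpacomm b x f]
      rw [hfun]
      exact finsum_eq_sum_of _ Cf fun b hb =>
        hCfm b (fun h0 => hb (by rw [h0, map_zero, mul_zero]))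
    have main : ev pa (fun b => pa y (Γ b μ x) - pa x (Γ b μ y)) f
        = ∑ b ∈ Cf, ((pa y (Γ b μ x) * pa b f + Γ b μ x * pa y (pa b f))
            - (pa x (Γ b μ y) * pa b f + Γ b μ y * pa x (pa b f))
            - Γ b μ x * pa y (pa b f) + Γ b μ y * pa x (pa b f)) := by
      rw [ev_eq_sum pa _ f Cf hCfm]
      exact Finset.sum_congr rfl fun b _ => by ring
    rw [main]
    have comb : ∑ b ∈ Cf,
        ((pa y (Γ b μ x) * pa b f + Γ b μ x * pa y (pa b f))
            - (pa x (Γ b μ y) * pa b f + Γ b μ y * pa x (pa b f))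
            - Γ b μ x * pa y (pa b f) + Γ b μ y * pa x (pa b f))
        = ((∑ b ∈ Cf, (pa y (Γ b μ x) * pa b f + Γ b μ x * pa y (pa b f))
            - ∑ b ∈ Cf, (pa x (Γ b μ y) * pa b f + Γ b μ y * pa x (pa b f)))
            - ∑ b ∈ Cf, Γ b μ x * pa y (pa b f)) + ∑ b ∈ Cf, Γ b μ y * pa x (pa b f) := by
      rw [← Finset.sum_sub_distrib, ← Finset.sum_sub_distrib, ← Finset.sum_add_distrib]
    rw [comb, ← e1, ← e2, ← e3, ← e4, hpacomm x y (D μ f), hpacomm x y f]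
    ring
  have := congrFun key e
  simpa [sub_eq_zero] using this

include hpafin hΓfin hΓ in
private theorem DevD (θ : A → F) (μ : Fin m)
    (hθμ : ∀ c, D μ (θ c) = -∑ᶠ b, Γ c μ b * θ b) (g : F) :
    D μ (ev pa θ g) = ev pa θ (D μ g) := by
  classical
  set Cg := (hpafin g).toFinset with hCg
  set E := (Cg ∪ (hpafin (D μ g)).toFinset) ∪ Cg.biUnion (fun c => sliceF Γ hΓfin c) with hE
  have hCgE : Cg ⊆ E := fun c hc => Finset.mem_union_left _ (Finset.mem_union_left _ hc)
  have hg : ∀ c, pa c g ≠ 0 → c ∈ E := fun c hc => hCgE ((hpafin g).mem_toFinset.2 hc)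
  have hgC : ∀ c, pa c g ≠ 0 → c ∈ Cg := fun c hc => (hpafin g).mem_toFinset.2 hc
  have hDg : ∀ c, pa c (D μ g) ≠ 0 → c ∈ E := fun c hc =>
    Finset.mem_union_left _ (Finset.mem_union_right _ ((hpafin (D μ g)).mem_toFinset.2 hc))
  rw [ev_eq_sum pa θ g E hg, map_sum]
  have expand : ∀ c, D μ (θ c * pa c g)
      = D μ (θ c) * pa c g + θ c * pa c (D μ g) + θ c * ∑ b ∈ Cg, Γ b μ c * pa b g := by
    intro c
    have h := hΓ μ c g
    rw [finsum_eq_sum_of _ Cg (fun b hb => hgC b (fun h0 => hb (by rw [h0, mul_zero])))] at h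
    have h3 : D μ (pa c g) = pa c (D μ g) + ∑ b ∈ Cg, Γ b μ c * pa b g :=
      sub_eq_iff_eq_add'.mp h
    rw [Derivation.leibniz, smul_eq_mul, smul_eq_mul, h3]
    ring
  have split : ∑ c ∈ E, D μ (θ c * pa c g)
      = (∑ c ∈ E, D μ (θ c) * pa c g) + (∑ c ∈ E, θ c * pa c (D μ g))
        + ∑ c ∈ E, θ c * ∑ b ∈ Cg, Γ b μ c * pa b g := by
    rw [← Finset.sum_add_distrib, ← Finset.sum_add_distrib]
    exact Finset.sum_congr rfl fun c _ => expand c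
  rw [split]
  have mid : ∑ c ∈ E, θ c * pa c (D μ g) = ev pa θ (D μ g) :=
    (ev_eq_sum pa θ (D μ g) E hDg).symm
  have hpag0 : ∀ c ∉ Cg, pa c g = 0 := fun c hc => by
    by_contra h0; exact hc (hgC c h0)
  have hDθ : ∀ c ∈ Cg, D μ (θ c) = -∑ b ∈ E, Γ c μ b * θ b := by
    intro c hc
    rw [hθμ c, finsum_eq_sum_of _ E (fun b hb => ?_)]
    have hΓne : Γ c μ b ≠ 0 := fun h0 => hb (by rw [h0, zero_mul])
    exact Finset.mem_union_right _ (Finset.mem_biUnion.2 ⟨c, hc, mem_sliceF Γ hΓfin hΓne⟩)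
  have first : ∑ c ∈ E, D μ (θ c) * pa c g
      = -∑ c ∈ Cg, ∑ b ∈ E, Γ c μ b * θ b * pa c g := by
    rw [← Finset.sum_subset hCgE (fun c _ hc => by rw [hpag0 c hc, mul_zero]),
      ← Finset.sum_neg_distrib]
    refine Finset.sum_congr rfl fun c hc => ?_
    rw [hDθ c hc, neg_mul, Finset.sum_mul]
  have third : ∑ c ∈ E, θ c * ∑ b ∈ Cg, Γ b μ c * pa b g
      = ∑ c ∈ Cg, ∑ b ∈ E, Γ c μ b * θ b * pa c g := by
    have l1 : ∑ c ∈ E, θ c * ∑ b ∈ Cg, Γ b μ c * pa b g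
        = ∑ c ∈ E, ∑ b ∈ Cg, θ c * (Γ b μ c * pa b g) :=
      Finset.sum_congr rfl fun c _ => Finset.mul_sum _ _ _
    rw [l1, Finset.sum_comm]
    exact Finset.sum_congr rfl fun b _ => Finset.sum_congr rfl fun c _ => by ring
  rw [mid, first, third]
  ring

end proofs

/-- `[ev_φ, ev_ψ] = ev_ξ` with `ξ^a = ev_φ ψ^a - ev_ψ φ^a`;
moreover, if `ψ ↦ ev_ψ` is injective and `φ, ψ ∈ Ē = ker ∇`, then `ξ ∈ Ē`
(so `Ē` is a Lie algebra under `[φ,ψ] = ξ`). -/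

theorem stmt_1
    {𝔽 : Type*} [Field 𝔽] [CharZero 𝔽] {F : Type*} [CommRing F] [Algebra 𝔽 F]
    {m : ℕ} {A : Type*}
    (D : Fin m → Derivation 𝔽 F F)
    (hDcomm : ∀ μ ν (f : F), D μ (D ν f) = D ν (D μ f))
    (pa : A → Derivation 𝔽 F F)
    (hpacomm : ∀ a b (f : F), pa a (pa b f) = pa b (pa a f))
    (hpafin : ∀ f : F, {a : A | pa a f ≠ 0}.Finite)
    (Γ : A → Fin m → A → F)
    (hΓfin : ∀ b : A, {p : Fin m × A | Γ b p.1 p.2 ≠ 0}.Finite)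
    (hΓ : ∀ (μ : Fin m) (a : A) (f : F),
      D μ (pa a f) - pa a (D μ f) = ∑ᶠ b, Γ b μ a * pa b f)
    (hinj : ∀ ψ : A → F, (∀ f, ev pa ψ f = 0) → ψ = 0) :
    (∀ (φ ψ : A → F) (f : F),
        ev pa φ (ev pa ψ f) - ev pa ψ (ev pa φ f)
          = ev pa (fun a => ev pa φ (ψ a) - ev pa ψ (φ a)) f)
    ∧ (∀ φ ψ : A → F, (∀ (a : A) (μ : Fin m), nabla D Γ φ a μ = 0) →
        (∀ (a : A) (μ : Fin m), nabla D Γ ψ a μ = 0) →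
        ∀ (a : A) (μ : Fin m),
          nabla D Γ (fun b => ev pa φ (ψ b) - ev pa ψ (φ b)) a μ = 0) := by
  classical
  constructor
  · -- part 1: the commutator identity
    intro φ ψ f
    set T := (hpafin f).toFinset with hT
    set U := ((T ∪ (hpafin (ev pa ψ f)).toFinset) ∪ (hpafin (ev pa φ f)).toFinset)
        ∪ T.biUnion (fun b => (hpafin (ψ b)).toFinset ∪ (hpafin (φ b)).toFinset) with hU
    have hTU : T ⊆ U := fun b hb =>
      Finset.mem_union_left _ (Finset.mem_union_left _ (Finset.mem_union_left _ hb))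
    have hTm : ∀ b, pa b f ≠ 0 → b ∈ T := fun b hb => (hpafin f).mem_toFinset.2 hb
    have hT0 : ∀ b ∉ T, pa b f = 0 := fun b hb => by
      by_contra h0; exact hb (hTm b h0)
    have hψev : ∀ a, pa a (ev pa ψ f) ≠ 0 → a ∈ U := fun a ha =>
      Finset.mem_union_left _ (Finset.mem_union_left _
        (Finset.mem_union_right _ ((hpafin _).mem_toFinset.2 ha)))
    have hφev : ∀ a, pa a (ev pa φ f) ≠ 0 → a ∈ U := fun a ha =>
      Finset.mem_union_left _ (Finset.mem_union_right _ ((hpafin _).mem_toFinset.2 ha))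
    have hψb : ∀ b ∈ T, ∀ a, pa a (ψ b) ≠ 0 → a ∈ U := fun b hb a ha =>
      Finset.mem_union_right _ (Finset.mem_biUnion.2
        ⟨b, hb, Finset.mem_union_left _ ((hpafin _).mem_toFinset.2 ha)⟩)
    have hφb : ∀ b ∈ T, ∀ a, pa a (φ b) ≠ 0 → a ∈ U := fun b hb a ha =>
      Finset.mem_union_right _ (Finset.mem_biUnion.2
        ⟨b, hb, Finset.mem_union_right _ ((hpafin _).mem_toFinset.2 ha)⟩)
    have expand : ∀ (χ η : A → F), (∀ a, pa a (ev pa η f) ≠ 0 → a ∈ U) →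
        ev pa χ (ev pa η f)
          = (∑ a ∈ U, ∑ b ∈ T, χ a * (pa a (η b) * pa b f))
            + ∑ a ∈ U, ∑ b ∈ U, χ a * (η b * pa a (pa b f)) := by
      intro χ η hmem
      rw [ev_eq_sum pa χ _ U hmem, ← Finset.sum_add_distrib]
      refine Finset.sum_congr rfl fun a _ => ?_
      have h1 : pa a (ev pa η f)
          = ∑ b ∈ T, (pa a (η b) * pa b f + η b * pa a (pa b f)) := by
        rw [ev_eq_sum pa η f T hTm, map_sum]
        refine Finset.sum_congr rfl fun b _ => ?_
        rw [Derivation.leibniz, smul_eq_mul, smul_eq_mul]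
        ring
      rw [h1, Finset.mul_sum]
      have h2 : ∀ b ∈ T, χ a * (pa a (η b) * pa b f + η b * pa a (pa b f))
          = χ a * (pa a (η b) * pa b f) + χ a * (η b * pa a (pa b f)) :=
        fun b _ => by ring
      rw [Finset.sum_congr rfl h2, Finset.sum_add_distrib]
      congr 1
      refine Finset.sum_subset hTU fun b _ hb => ?_
      rw [hT0 b hb, map_zero, mul_zero, mul_zero]
    rw [expand φ ψ hψev, expand ψ φ hφev]
    have hcross : ∑ a ∈ U, ∑ b ∈ U, φ a * (ψ b * pa a (pa b f))
        = ∑ a ∈ U, ∑ b ∈ U, ψ a * (φ b * pa a (pa b f)) := by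
      rw [Finset.sum_comm]
      refine Finset.sum_congr rfl fun a _ => Finset.sum_congr rfl fun b _ => ?_
      rw [hpacomm b a f]
      ring
    rw [hcross]
    have hrhs : ev pa (fun a => ev pa φ (ψ a) - ev pa ψ (φ a)) f
        = ∑ b ∈ T, ∑ a ∈ U, (φ a * pa a (ψ b) * pa b f - ψ a * pa a (φ b) * pa b f) := by
      rw [ev_eq_sum pa _ f T hTm]
      refine Finset.sum_congr rfl fun b hb => ?_
      rw [ev_eq_sum pa φ (ψ b) U (hψb b hb), ev_eq_sum pa ψ (φ b) U (hφb b hb),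
        sub_mul, Finset.sum_mul, Finset.sum_mul, ← Finset.sum_sub_distrib]
    have final : (∑ a ∈ U, ∑ b ∈ T, φ a * (pa a (ψ b) * pa b f))
        - ∑ a ∈ U, ∑ b ∈ T, ψ a * (pa a (φ b) * pa b f)
        = ∑ b ∈ T, ∑ a ∈ U, (φ a * pa a (ψ b) * pa b f - ψ a * pa a (φ b) * pa b f) := by
      conv_rhs => rw [Finset.sum_comm]
      rw [← Finset.sum_sub_distrib]
      refine Finset.sum_congr rfl fun a _ => ?_
      rw [← Finset.sum_sub_distrib]
      exact Finset.sum_congr rfl fun b _ => by ring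
    rw [hrhs, ← final]
    ring
  · -- part 2: Ē is closed under the bracket
    intro φ ψ hφ hψ a μ
    simp only [nabla] at hφ hψ ⊢
    have hφ' : ∀ c, D μ (φ c) = -∑ᶠ b, Γ c μ b * φ b := fun c =>
      eq_neg_of_add_eq_zero_left (hφ c μ)
    have hψ' : ∀ c, D μ (ψ c) = -∑ᶠ b, Γ c μ b * ψ b := fun c =>
      eq_neg_of_add_eq_zero_left (hψ c μ)
    set G := sliceF Γ hΓfin a with hGdef
    have hGmem : ∀ b, Γ a μ b ≠ 0 → b ∈ G := fun b hb => mem_sliceF Γ hΓfin hb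
    set K := G ∪ G.biUnion (fun b => (hpafin (Γ a μ b)).toFinset) with hK
    have hGK : G ⊆ K := fun b hb => Finset.mem_union_left _ hb
    have hbK : ∀ b ∈ G, ∀ c, pa c (Γ a μ b) ≠ 0 → c ∈ K := fun b hb c hc =>
      Finset.mem_union_right _ (Finset.mem_biUnion.2 ⟨b, hb, (hpafin _).mem_toFinset.2 hc⟩)
    have sym := pa_Gamma_symm D pa hpacomm hpafin Γ hΓ hinj
    have s1 : D μ (ev pa φ (ψ a) - ev pa ψ (φ a))
        = ev pa φ (D μ (ψ a)) - ev pa ψ (D μ (φ a)) := by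
      rw [map_sub, DevD D pa hpafin Γ hΓfin hΓ φ μ hφ' (ψ a),
        DevD D pa hpafin Γ hΓfin hΓ ψ μ hψ' (φ a)]
    have s2 : D μ (ψ a) = -∑ b ∈ G, Γ a μ b * ψ b := by
      rw [hψ' a, finsum_eq_sum_of _ G (fun b hb =>
        hGmem b (fun h0 => hb (by rw [h0, zero_mul])))]
    have s2' : D μ (φ a) = -∑ b ∈ G, Γ a μ b * φ b := by
      rw [hφ' a, finsum_eq_sum_of _ G (fun b hb =>
        hGmem b (fun h0 => hb (by rw [h0, zero_mul])))]
    have s3 : ev pa φ (D μ (ψ a))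
        = -∑ b ∈ G, (ev pa φ (Γ a μ b) * ψ b + Γ a μ b * ev pa φ (ψ b)) := by
      rw [s2, ev_neg' pa hpafin, ev_finset_sum pa hpafin, neg_inj]
      exact Finset.sum_congr rfl fun b _ => ev_mul' pa hpafin φ (Γ a μ b) (ψ b)
    have s4 : ev pa ψ (D μ (φ a))
        = -∑ b ∈ G, (ev pa ψ (Γ a μ b) * φ b + Γ a μ b * ev pa ψ (φ b)) := by
      rw [s2', ev_neg' pa hpafin, ev_finset_sum pa hpafin, neg_inj]
      exact Finset.sum_congr rfl fun b _ => ev_mul' pa hpafin ψ (Γ a μ b) (φ b)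
    have s5 : ∑ᶠ b, Γ a μ b * (ev pa φ (ψ b) - ev pa ψ (φ b))
        = ∑ b ∈ G, Γ a μ b * (ev pa φ (ψ b) - ev pa ψ (φ b)) :=
      finsum_eq_sum_of _ G fun b hb => hGmem b (fun h0 => hb (by rw [h0, zero_mul]))
    rw [s1, s3, s4, s5]
    have comb : -∑ b ∈ G, (ev pa φ (Γ a μ b) * ψ b + Γ a μ b * ev pa φ (ψ b))
        - -∑ b ∈ G, (ev pa ψ (Γ a μ b) * φ b + Γ a μ b * ev pa ψ (φ b))
        + ∑ b ∈ G, Γ a μ b * (ev pa φ (ψ b) - ev pa ψ (φ b))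
        = ∑ b ∈ G, (ev pa ψ (Γ a μ b) * φ b - ev pa φ (Γ a μ b) * ψ b) := by
      rw [sub_neg_eq_add, ← Finset.sum_neg_distrib, ← Finset.sum_add_distrib,
        ← Finset.sum_add_distrib]
      exact Finset.sum_congr rfl fun b _ => by ring
    rw [comb]
    have T1 : ∑ b ∈ G, ev pa φ (Γ a μ b) * ψ b
        = ∑ b ∈ K, ∑ c ∈ K, φ c * pa c (Γ a μ b) * ψ b := by
      rw [Finset.sum_congr rfl (fun b hb => by
        rw [ev_eq_sum pa φ (Γ a μ b) K (hbK b hb), Finset.sum_mul])]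
      refine Finset.sum_subset hGK fun b _ hb => ?_
      refine Finset.sum_eq_zero fun c _ => ?_
      rw [not_mem_sliceF Γ hΓfin hb, map_zero, mul_zero, zero_mul]
    have T2 : ∑ b ∈ G, ev pa ψ (Γ a μ b) * φ b
        = ∑ b ∈ K, ∑ c ∈ K, ψ c * pa c (Γ a μ b) * φ b := by
      rw [Finset.sum_congr rfl (fun b hb => by
        rw [ev_eq_sum pa ψ (Γ a μ b) K (hbK b hb), Finset.sum_mul])]
      refine Finset.sum_subset hGK fun b _ hb => ?_
      refine Finset.sum_eq_zero fun c _ => ?_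
      rw [not_mem_sliceF Γ hΓfin hb, map_zero, mul_zero, zero_mul]
    rw [Finset.sum_sub_distrib, T1, T2, sub_eq_zero, Finset.sum_comm]
    refine Finset.sum_congr rfl fun b _ => Finset.sum_congr rfl fun c _ => ?_
    rw [sym μ a c b]
    ring
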